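/- For every f ∈ Diff_0([0,1]), one has lim_{n→∞} Γ_n(f)^{1/n} = 1 if and only if f'(ξ) = 1 for every fixed point ξ of f. -/

import Mathlib

/-- `IsDiff0 f g` says that `f` is an orientation-preserving `C¹` diffeomorphism of the
interval `[0,1]` fixing the endpoints, with inverse `g`. -/
structure IsDiff0 (f g : ℝ → ℝ) : Prop where
  mapsTo : Set.MapsTo f (Set.Icc 0 1) (Set.Icc 0 1)
  mapsTo_inv : Set.MapsTo g (Set.Icc 0 1) (Set.Icc 0 1)
  left_inv : ∀ x ∈ Set.Icc (0:ℝ) 1, g (f x) = x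
  right_inv : ∀ x ∈ Set.Icc (0:ℝ) 1, f (g x) = x
  map_zero : f 0 = 0
  map_one : f 1 = 1
  contDiffOn : ContDiffOn ℝ 1 f (Set.Icc 0 1)
  contDiffOn_inv : ContDiffOn ℝ 1 g (Set.Icc 0 1)
  deriv_pos : ∀ x ∈ Set.Icc (0:ℝ) 1, 0 < derivWithin f (Set.Icc 0 1) x

/-- The growth sequence `Γ_n(f) = max (sup_x (fⁿ)'(x), sup_x (f⁻ⁿ)'(x))`, where `g = f⁻¹`. -/
noncomputable def Gamma (f g : ℝ → ℝ) (n : ℕ) : ℝ :=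
  max (⨆ x : Set.Icc (0:ℝ) 1, derivWithin (f^[n]) (Set.Icc 0 1) (x : ℝ))
      (⨆ x : Set.Icc (0:ℝ) 1, derivWithin (g^[n]) (Set.Icc 0 1) (x : ℝ))

namespace GammaAux

open Set

local notation "I01" => Set.Icc (0:ℝ) 1

lemma ud : UniqueDiffOn ℝ I01 := uniqueDiffOn_Icc one_pos

instance : Nonempty ↥I01 := ⟨⟨0, by norm_num⟩⟩

lemma hdw {f : ℝ → ℝ} (h : ContDiffOn ℝ 1 f I01) {x : ℝ} (hx : x ∈ I01) :
    HasDerivWithinAt f (derivWithin f I01 x) I01 x :=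
  ((h.differentiableOn one_ne_zero) x hx).hasDerivWithinAt

lemma iter_deriv {f : ℝ → ℝ} (hc : ContDiffOn ℝ 1 f I01) (hm : MapsTo f I01 I01)
    (n : ℕ) {x : ℝ} (hx : x ∈ I01) :
    HasDerivWithinAt (f^[n])
      (∏ k ∈ Finset.range n, derivWithin f I01 (f^[k] x)) I01 x := by
  induction n generalizing x with
  | zero => simpa using hasDerivWithinAt_id x I01
  | succ n ih =>
    have hfx : f x ∈ I01 := hm hx
    have h1 := (ih hfx).comp x (hdw hc hx) hm
    have heq : (fun y => f^[n] (f y)) = f^[n+1] := by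
      funext y; exact (Function.iterate_succ_apply f n y).symm
    rw [Function.comp_def, heq] at h1
    refine h1.congr_deriv ?_
    rw [Finset.prod_range_succ']
    simp [Function.iterate_succ_apply]

lemma iter_derivWithin {f : ℝ → ℝ} (hc : ContDiffOn ℝ 1 f I01) (hm : MapsTo f I01 I01)
    (n : ℕ) {x : ℝ} (hx : x ∈ I01) :
    derivWithin (f^[n]) I01 x = ∏ k ∈ Finset.range n, derivWithin f I01 (f^[k] x) :=
  (iter_deriv hc hm n hx).derivWithin (ud x hx)

lemma inv_deriv_mul (f g : ℝ → ℝ) (hf : IsDiff0 f g) {x : ℝ} (hx : x ∈ I01) :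
    derivWithin g I01 (f x) * derivWithin f I01 x = 1 := by
  have hfx : f x ∈ I01 := hf.mapsTo hx
  have h1 := ((hdw hf.contDiffOn_inv hfx).comp x (hdw hf.contDiffOn hx) hf.mapsTo).congr
    (fun y hy => (hf.left_inv y hy).symm) (hf.left_inv x hx).symm
  have h2 := h1.derivWithin (ud x hx)
  rw [show (fun y : ℝ => y) = id from rfl, derivWithin_id x I01 (ud x hx)] at h2
  exact h2.symm

lemma isDiff0_symm (f g : ℝ → ℝ) (hf : IsDiff0 f g) : IsDiff0 g f := by
  refine ⟨hf.mapsTo_inv, hf.mapsTo, hf.right_inv, hf.left_inv, ?_, ?_,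
    hf.contDiffOn_inv, hf.contDiffOn, ?_⟩
  · conv_lhs => rw [← hf.map_zero]
    exact hf.left_inv 0 (by norm_num)
  · conv_lhs => rw [← hf.map_one]
    exact hf.left_inv 1 (by norm_num)
  · intro y hy
    have hgy : g y ∈ I01 := hf.mapsTo_inv hy
    have h := inv_deriv_mul f g hf hgy
    rw [hf.right_inv y hy] at h
    nlinarith [hf.deriv_pos (g y) hgy]

lemma deriv_inv_eq (f g : ℝ → ℝ) (hf : IsDiff0 f g) {y : ℝ} (hy : y ∈ I01) :
    derivWithin g I01 y = 1 / derivWithin f I01 (g y) := by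
  have hgy : g y ∈ I01 := hf.mapsTo_inv hy
  have h := inv_deriv_mul f g hf hgy
  rw [hf.right_inv y hy] at h
  have hp := hf.deriv_pos (g y) hgy
  field_simp
  linarith [h]

lemma strict_mono_of (f : ℝ → ℝ) (hc : ContDiffOn ℝ 1 f I01)
    (hp : ∀ x ∈ I01, 0 < derivWithin f I01 x) : StrictMonoOn f I01 := by
  apply strictMonoOn_of_deriv_pos (convex_Icc 0 1) hc.continuousOn
  intro x hx
  rw [interior_Icc] at hx
  have hx' : x ∈ I01 := Ioo_subset_Icc_self hx
  have h1 : HasDerivWithinAt f (derivWithin f I01 x) I01 x :=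
    ((hc.differentiableOn one_ne_zero) x hx').hasDerivWithinAt
  have h2 : HasDerivAt f (derivWithin f I01 x) x :=
    h1.hasDerivAt (Icc_mem_nhds hx.1 hx.2)
  rw [h2.deriv]
  exact hp x hx'

/-- Counting lemma: the orbit of `x` visits a set `K` on which `f` moves points by at
least `η` at most `1/η` times. -/
lemma count_visits (f : ℝ → ℝ) (hm : MapsTo f I01 I01) (hsm : StrictMonoOn f I01)
    (K : Set ℝ) (η : ℝ) (hη : 0 < η) (hKf : ∀ y ∈ K, η ≤ |f y - y|)
    {x : ℝ} (hx : x ∈ I01) (S : Finset ℕ) (hS : ∀ k ∈ S, f^[k] x ∈ K) :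
    η * S.card ≤ 1 := by
  have horb : ∀ k, f^[k] x ∈ I01 := fun k => hm.iterate k hx
  set n : ℕ := S.sup id + 1 with hndef
  have hSn : S ⊆ Finset.range n := by
    intro k hk
    rw [Finset.mem_range, hndef]
    exact Nat.lt_succ_of_le (Finset.le_sup (f := id) hk)
  rcases lt_trichotomy (f x) x with hlt | heq | hgt
  · have hmono : ∀ k, f^[k+1] x < f^[k] x := by
      intro k
      induction k with
      | zero => simpa using hlt
      | succ k ih =>
        have := hsm (horb (k+1)) (horb k) ih
        simpa [Function.iterate_succ_apply'] using this
    have hstep : ∀ k ∈ S, η ≤ f^[k] x - f^[k+1] x := by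
      intro k hk
      have h1 := hKf _ (hS k hk)
      have h2 := hmono k
      rw [Function.iterate_succ_apply'] at h2 ⊢
      rw [abs_of_neg (by linarith)] at h1
      linarith
    calc η * S.card = ∑ _k ∈ S, η := by rw [Finset.sum_const, nsmul_eq_mul, mul_comm]
      _ ≤ ∑ k ∈ S, (f^[k] x - f^[k+1] x) := Finset.sum_le_sum hstep
      _ ≤ ∑ k ∈ Finset.range n, (f^[k] x - f^[k+1] x) := by
          apply Finset.sum_le_sum_of_subset_of_nonneg hSn
          intro k _ _
          linarith [hmono k]
      _ = x - f^[n] x := by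
          have h2 : ∑ k ∈ Finset.range n, (f^[k] x - f^[k+1] x)
              = -∑ k ∈ Finset.range n, (f^[k+1] x - f^[k] x) := by
            rw [← Finset.sum_neg_distrib]; congr 1; funext k; ring
          rw [h2, Finset.sum_range_sub (fun k => f^[k] x) n]; simp
      _ ≤ 1 := by
          have hn := horb n
          have := hn.1; have := hx.2
          linarith
  · have hfix : ∀ k, f^[k] x = x := by
      intro k
      induction k with
      | zero => rfl
      | succ k ih => rw [Function.iterate_succ_apply', ih, heq]
    have hSe : S = ∅ := by
      apply Finset.eq_empty_of_forall_notMem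
      intro k hk
      have hxK := hS k hk
      rw [hfix k] at hxK
      have := hKf x hxK
      rw [heq] at this
      simp at this
      linarith
    rw [hSe]
    simp
  · have hmono : ∀ k, f^[k] x < f^[k+1] x := by
      intro k
      induction k with
      | zero => simpa using hgt
      | succ k ih =>
        have := hsm (horb k) (horb (k+1)) ih
        simpa [Function.iterate_succ_apply'] using this
    have hstep : ∀ k ∈ S, η ≤ f^[k+1] x - f^[k] x := by
      intro k hk
      have h1 := hKf _ (hS k hk)
      have h2 := hmono k
      rw [Function.iterate_succ_apply'] at h2 ⊢
      rw [abs_of_pos (by linarith)] at h1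
      linarith
    calc η * S.card = ∑ _k ∈ S, η := by rw [Finset.sum_const, nsmul_eq_mul, mul_comm]
      _ ≤ ∑ k ∈ S, (f^[k+1] x - f^[k] x) := Finset.sum_le_sum hstep
      _ ≤ ∑ k ∈ Finset.range n, (f^[k+1] x - f^[k] x) := by
          apply Finset.sum_le_sum_of_subset_of_nonneg hSn
          intro k _ _
          linarith [hmono k]
      _ = f^[n] x - x := by rw [Finset.sum_range_sub (fun k => f^[k] x) n]; simp
      _ ≤ 1 := by
          have hn := horb n
          have := hn.2; have := hx.1
          linarith

/-- The key subexponential estimate: if the derivative is `1` at every fixed point,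
then `(fⁿ)' ≤ C e^{εn}`. -/
lemma subexp (f : ℝ → ℝ) (hm : MapsTo f I01 I01) (hc : ContDiffOn ℝ 1 f I01)
    (hp : ∀ x ∈ I01, 0 < derivWithin f I01 x)
    (h1 : ∀ ξ ∈ I01, f ξ = ξ → derivWithin f I01 ξ = 1)
    {ε : ℝ} (hε : 0 < ε) :
    ∃ C : ℝ, 1 ≤ C ∧ ∀ n : ℕ, ∀ x ∈ I01, derivWithin (f^[n]) I01 x ≤ C * Real.exp (ε * n) := by
  classical
  have Fcont : ContinuousOn (derivWithin f I01) I01 :=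
    hc.continuousOn_derivWithin ud le_rfl
  obtain ⟨b, hb⟩ := isCompact_Icc.exists_bound_of_continuousOn Fcont
  set b' : ℝ := max b 1 with hb'def
  have hb1 : (1:ℝ) ≤ b' := le_max_right _ _
  have hbF : ∀ y ∈ I01, derivWithin f I01 y ≤ b' := fun y hy =>
    le_trans (le_trans (le_abs_self _) (hb y hy)) (le_max_left _ _)
  set K : Set ℝ := I01 ∩ (derivWithin f I01) ⁻¹' (Ici (Real.exp ε)) with hKdef
  have hKsub : K ⊆ I01 := inter_subset_left
  have hKcl : IsClosed K :=
    Fcont.preimage_isClosed_of_isClosed isClosed_Icc isClosed_Ici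
  have hKc : IsCompact K := isCompact_Icc.of_isClosed_subset hKcl hKsub
  have hexp1 : (1:ℝ) < Real.exp ε := by
    rw [show (1:ℝ) = Real.exp 0 from (Real.exp_zero).symm]; exact Real.exp_lt_exp.mpr hε
  obtain ⟨η, hη, hηK⟩ : ∃ η > 0, ∀ y ∈ K, η ≤ |f y - y| := by
    rcases K.eq_empty_or_nonempty with he | hne
    · exact ⟨1, one_pos, by simp [he]⟩
    · have hcont : ContinuousOn (fun y => |f y - y|) K :=
        ((hc.continuousOn.mono hKsub).sub continuousOn_id).abs
      obtain ⟨y₀, hy₀K, hmin⟩ := hKc.exists_isMinOn hne hcont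
      refine ⟨|f y₀ - y₀|, ?_, fun y hy => hmin hy⟩
      have hne' : f y₀ ≠ y₀ := by
        intro hfix
        have := h1 y₀ (hKsub hy₀K) hfix
        have h2 : Real.exp ε ≤ derivWithin f I01 y₀ := hy₀K.2
        rw [this] at h2
        linarith
      have : f y₀ - y₀ ≠ 0 := sub_ne_zero.mpr hne'
      positivity
  set M : ℕ := Nat.ceil (1/η) with hMdef
  refine ⟨b' ^ M, one_le_pow₀ hb1, ?_⟩
  intro n x hx
  rw [iter_derivWithin hc hm n hx]
  set S := (Finset.range n).filter (fun k => f^[k] x ∈ K) with hSdef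
  have horb : ∀ k, f^[k] x ∈ I01 := fun k => hm.iterate k hx
  have hcardM : S.card ≤ M := by
    have h2 := count_visits f hm (strict_mono_of f hc hp)
      K η hη hηK hx S (fun k hk => (Finset.mem_filter.mp hk).2)
    have h3 : (S.card : ℝ) ≤ 1/η := by
      rw [le_div_iff₀ hη, mul_comm]
      exact h2
    exact_mod_cast h3.trans (Nat.le_ceil _)
  have hterm : ∀ k ∈ Finset.range n, derivWithin f I01 (f^[k] x)
      ≤ if f^[k] x ∈ K then b' else Real.exp ε := by
    intro k _
    by_cases hk : f^[k] x ∈ K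
    · rw [if_pos hk]; exact hbF _ (horb k)
    · rw [if_neg hk]
      by_contra hcon
      push_neg at hcon
      exact hk ⟨horb k, le_of_lt hcon⟩
  calc ∏ k ∈ Finset.range n, derivWithin f I01 (f^[k] x)
      ≤ ∏ k ∈ Finset.range n, (if f^[k] x ∈ K then b' else Real.exp ε) :=
        Finset.prod_le_prod (fun k _ => le_of_lt (hp _ (horb k))) hterm
    _ = b' ^ S.card * Real.exp ε ^ ((Finset.range n).filter (fun k => ¬ f^[k] x ∈ K)).card := by
        rw [Finset.prod_ite]; simp [hSdef]
    _ ≤ b' ^ M * Real.exp ε ^ n := by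
        apply mul_le_mul
        · exact pow_le_pow_right₀ hb1 hcardM
        · apply pow_le_pow_right₀ (le_of_lt hexp1)
          calc ((Finset.range n).filter (fun k => ¬ f^[k] x ∈ K)).card
              ≤ (Finset.range n).card := Finset.card_filter_le _ _
            _ = n := Finset.card_range n
        · positivity
        · positivity
    _ = b' ^ M * Real.exp (ε * n) := by
        rw [mul_comm ε (n:ℝ), Real.exp_nat_mul]

lemma contOn_iter {f : ℝ → ℝ} (hc : ContinuousOn f I01) (hm : MapsTo f I01 I01) (k : ℕ) :
    ContinuousOn (f^[k]) I01 := by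
  induction k with
  | zero => simpa using continuousOn_id
  | succ k ih => simpa [Function.iterate_succ_apply] using ih.comp hc hm

lemma bdd_iter {f : ℝ → ℝ} (hc : ContDiffOn ℝ 1 f I01) (hm : MapsTo f I01 I01) (n : ℕ) :
    BddAbove (Set.range fun x : ↥I01 => derivWithin (f^[n]) I01 (x : ℝ)) := by
  have Fcont : ContinuousOn (derivWithin f I01) I01 :=
    hc.continuousOn_derivWithin ud le_rfl
  have hprod : ContinuousOn (fun x => ∏ k ∈ Finset.range n, derivWithin f I01 (f^[k] x)) I01 := by
    induction n with
    | zero => simpa using continuousOn_const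
    | succ n ih =>
      have hk : ContinuousOn (fun x => derivWithin f I01 (f^[n] x)) I01 :=
        Fcont.comp (contOn_iter hc.continuousOn hm n) (hm.iterate n)
      simpa [Finset.prod_range_succ, Pi.mul_def] using ih.mul hk
  have hcont : ContinuousOn (fun x => derivWithin (f^[n]) I01 x) I01 :=
    hprod.congr (fun x hx => iter_derivWithin hc hm n hx)
  have him : BddAbove ((fun x => derivWithin (f^[n]) I01 x) '' I01) :=
    (isCompact_Icc.image_of_continuousOn hcont).bddAbove
  rwa [Set.image_eq_range] at him

lemma iter_fixed {f : ℝ → ℝ} {ξ : ℝ} (h : f ξ = ξ) (k : ℕ) : f^[k] ξ = ξ := by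
  induction k with
  | zero => rfl
  | succ k ih => rw [Function.iterate_succ_apply', ih, h]

/-- At a fixed point the derivative of the iterate is the power of the derivative,
and it bounds `Gamma` from below. -/
lemma gamma_ge (f g : ℝ → ℝ) (hf : IsDiff0 f g) {ξ : ℝ} (hξ : ξ ∈ I01)
    (hfix : f ξ = ξ) (n : ℕ) : derivWithin f I01 ξ ^ n ≤ Gamma f g n := by
  have h1 : derivWithin (f^[n]) I01 ξ = derivWithin f I01 ξ ^ n := by
    rw [iter_derivWithin hf.contDiffOn hf.mapsTo n hξ]
    rw [Finset.prod_congr rfl (fun k _ => by rw [iter_fixed hfix k]), Finset.prod_const,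
      Finset.card_range]
  have h2 : derivWithin (f^[n]) I01 ξ
      ≤ ⨆ x : ↥I01, derivWithin (f^[n]) I01 (x : ℝ) :=
    le_ciSup (bdd_iter hf.contDiffOn hf.mapsTo n) ⟨ξ, hξ⟩
  rw [h1] at h2
  exact h2.trans (le_max_left _ _)

lemma gamma_comm (f g : ℝ → ℝ) (n : ℕ) : Gamma f g n = Gamma g f n := max_comm _ _

end GammaAux

open GammaAux in
/-- `lim Γ_n(f)^{1/n} = 1` if and only if `f'(ξ) = 1` at every fixed point `ξ` of `f`. -/
theorem gamma_eq_one_iff_deriv_eq_one_at_fixed_points (f g : ℝ → ℝ) (hf : IsDiff0 f g) :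
    Filter.Tendsto (fun n : ℕ => Gamma f g n ^ (1 / (n : ℝ))) Filter.atTop (nhds 1) ↔
      ∀ ξ ∈ Set.Icc (0:ℝ) 1, f ξ = ξ → derivWithin f (Set.Icc 0 1) ξ = 1 := by
  have hg := isDiff0_symm f g hf
  constructor
  · intro htend ξ hξ hfix
    by_contra hne
    have hdp := hf.deriv_pos ξ hξ
    have key : ∀ μ : ℝ, 1 < μ → (∀ n, μ ^ n ≤ Gamma f g n) → False := by
      intro μ hμ hb
      have hev : ∀ᶠ n in Filter.atTop, μ ≤ Gamma f g n ^ (1/(n:ℝ)) := by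
        filter_upwards [Filter.eventually_ge_atTop 1] with n hn
        have hnR : (1:ℝ) ≤ (n:ℝ) := by exact_mod_cast hn
        have h0 : (0:ℝ) < μ^n := by positivity
        have hle := Real.rpow_le_rpow (le_of_lt h0) (hb n)
          (by positivity : (0:ℝ) ≤ 1/(n:ℝ))
        calc μ = ((μ:ℝ)^n) ^ (1/(n:ℝ)) := by
              rw [← Real.rpow_natCast μ n, ← Real.rpow_mul (by linarith), mul_one_div,
                div_self (by linarith : (n:ℝ) ≠ 0), Real.rpow_one]
          _ ≤ _ := hle
      have := ge_of_tendsto htend hev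
      linarith
    rcases lt_or_gt_of_ne hne with hlt | hgt
    · -- derivative < 1 at ξ : use g
      have gfix : g ξ = ξ := by
        conv_lhs => rw [← hfix]
        exact hf.left_inv ξ hξ
      have hGξ : derivWithin g (Set.Icc 0 1) ξ = 1 / derivWithin f (Set.Icc 0 1) ξ := by
        rw [deriv_inv_eq f g hf hξ, gfix]
      have hμ : 1 < derivWithin g (Set.Icc 0 1) ξ := by
        rw [hGξ]
        rw [lt_div_iff₀ hdp]
        linarith
      exact key _ hμ (fun n => (gamma_ge g f hg hξ gfix n).trans_eq (gamma_comm g f n))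
    · exact key _ hgt (fun n => gamma_ge f g hf hξ hfix n)
  · intro h1
    have h1g : ∀ ξ ∈ Set.Icc (0:ℝ) 1, g ξ = ξ → derivWithin g (Set.Icc 0 1) ξ = 1 := by
      intro ξ hξ hfix
      have hffix : f ξ = ξ := by
        conv_lhs => rw [← hfix]
        exact hf.right_inv ξ hξ
      rw [deriv_inv_eq f g hf hξ, hfix, h1 ξ hξ hffix]
      norm_num
    have hge1 : ∀ n, 1 ≤ Gamma f g n := by
      intro n
      have h0 : (0:ℝ) ∈ Set.Icc (0:ℝ) 1 := by norm_num
      have h2 := gamma_ge f g hf h0 hf.map_zero n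
      rw [h1 0 h0 hf.map_zero, one_pow] at h2
      exact h2
    rw [tendsto_order]
    constructor
    · intro a ha
      apply Filter.Eventually.of_forall
      intro n
      calc a < 1 := ha
        _ = (1:ℝ) ^ (1/(n:ℝ)) := (Real.one_rpow _).symm
        _ ≤ Gamma f g n ^ (1/(n:ℝ)) :=
            Real.rpow_le_rpow zero_le_one (hge1 n) (by positivity)
    · intro b hb
      set ε : ℝ := Real.log b / 2 with hεdef
      have hε : 0 < ε := by
        have := Real.log_pos hb
        rw [hεdef]; linarith
      obtain ⟨Cf, hCf1, hCf⟩ := subexp f hf.mapsTo hf.contDiffOn hf.deriv_pos h1 hε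
      obtain ⟨Cg, hCg1, hCg⟩ := subexp g hg.mapsTo hg.contDiffOn hg.deriv_pos h1g hε
      set C : ℝ := max Cf Cg with hCdef
      have hC1 : (1:ℝ) ≤ C := le_trans hCf1 (le_max_left _ _)
      have hC0 : (0:ℝ) < C := lt_of_lt_of_le one_pos hC1
      have hGam : ∀ n : ℕ, Gamma f g n ≤ C * Real.exp (ε * n) := by
        intro n
        apply max_le
        · apply ciSup_le
          intro x
          exact (hCf n x x.2).trans
            (mul_le_mul_of_nonneg_right (le_max_left _ _) (Real.exp_pos _).le)
        · apply ciSup_le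
          intro x
          exact (hCg n x x.2).trans
            (mul_le_mul_of_nonneg_right (le_max_right _ _) (Real.exp_pos _).le)
      have hCn : Filter.Tendsto (fun n : ℕ => C ^ (1/(n:ℝ))) Filter.atTop (nhds 1) := by
        have h2 : Filter.Tendsto (fun n : ℕ => Real.log C * (1/(n:ℝ)))
            Filter.atTop (nhds 0) := by
          have := tendsto_one_div_atTop_nhds_zero_nat.const_mul (Real.log C)
          simpa using this
        have h3 := (Real.continuous_exp.tendsto 0).comp h2
        rw [Real.exp_zero] at h3
        refine h3.congr fun n => ?_
        rw [Function.comp_apply, ← Real.rpow_def_of_pos hC0]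
      have hexpε1 : (1:ℝ) < Real.exp ε := by
        rw [show (1:ℝ) = Real.exp 0 from (Real.exp_zero).symm]
        exact Real.exp_lt_exp.mpr hε
      have hbe : 1 < b / Real.exp ε := by
        have hb2 : Real.exp ε * Real.exp ε = b := by
          rw [← Real.exp_add]
          rw [show ε + ε = Real.log b by rw [hεdef]; ring]
          exact Real.exp_log (by linarith)
        rw [lt_div_iff₀ (Real.exp_pos ε), one_mul]
        nlinarith
      have hev2 : ∀ᶠ n : ℕ in Filter.atTop, C ^ (1/(n:ℝ)) < b / Real.exp ε :=
        hCn.eventually_lt_const hbe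
      filter_upwards [hev2, Filter.eventually_ge_atTop 1] with n hn1 hn2
      have hnR : (1:ℝ) ≤ (n:ℝ) := by exact_mod_cast hn2
      calc Gamma f g n ^ (1/(n:ℝ))
          ≤ (C * Real.exp (ε * n)) ^ (1/(n:ℝ)) :=
            Real.rpow_le_rpow (le_trans zero_le_one (hge1 n)) (hGam n) (by positivity)
        _ = C ^ (1/(n:ℝ)) * Real.exp (ε * n) ^ (1/(n:ℝ)) :=
            Real.mul_rpow hC0.le (Real.exp_pos _).le
        _ = C ^ (1/(n:ℝ)) * Real.exp ε := by
            rw [Real.rpow_def_of_pos (Real.exp_pos _), Real.log_exp]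
            congr 1
            field_simp
        _ < (b / Real.exp ε) * Real.exp ε :=
            mul_lt_mul_of_pos_right hn1 (Real.exp_pos ε)
        _ = b := div_mul_cancel₀ b (Real.exp_ne_zero ε)
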